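/- arXiv:1703.04008 — 2 statements merged into one kernel-verified Lean document; each statement's English description precedes it below -/
import Mathlib

section
/- Let P^t (t ≥ 0) be a Markov semigroup on (X, 𝓑), h > 0, and suppose π_h is an invariant probability measure for P^h. If ‖π_h P^δ − π_h‖_TV → 0 as δ → 0⁺, then π_h is invariant for P^t for every t > 0. -/
open MeasureTheory ENNReal Filter Topology
noncomputable section

variable {X : Type*} [MeasurableSpace X]

/-- total variation distance (sup over measurable sets convention). -/
def tvDist (μ ν : Measure X) : ℝ :=
  ⨆ A : {s : Set X // MeasurableSet s}, |(μ A).toReal - (ν A).toReal|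

lemma abs_le_tvDist (μ ν : Measure X) [IsFiniteMeasure μ] [IsFiniteMeasure ν]
    {A : Set X} (hA : MeasurableSet A) :
    |(μ A).toReal - (ν A).toReal| ≤ tvDist μ ν := by
  apply le_ciSup (f := fun A : {s : Set X // MeasurableSet s} =>
    |(μ (A : Set X)).toReal - (ν (A : Set X)).toReal|) ?_ ⟨A, hA⟩
  refine ⟨(μ Set.univ).toReal + (ν Set.univ).toReal, ?_⟩
  rintro x ⟨B, rfl⟩
  have h1 : (μ (B : Set X)).toReal ≤ (μ Set.univ).toReal :=
    ENNReal.toReal_mono (measure_ne_top _ _) (measure_mono (Set.subset_univ _))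
  have h2 : (ν (B : Set X)).toReal ≤ (ν Set.univ).toReal :=
    ENNReal.toReal_mono (measure_ne_top _ _) (measure_mono (Set.subset_univ _))
  have h3 : (0:ℝ) ≤ (μ (B : Set X)).toReal := ENNReal.toReal_nonneg
  have h4 : (0:ℝ) ≤ (ν (B : Set X)).toReal := ENNReal.toReal_nonneg
  rw [abs_sub_le_iff]
  constructor <;> linarith

/-- If `π_h` is invariant for the time-`h` kernel of a Markov semigroup, it is invariant for all
rational multiples of `h`, and `‖π_h P^δ − π_h‖_TV → 0` as `δ → 0⁺`, then `π_h` is invariant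
for `P^t` for every `t > 0`. -/
theorem invariant_forall_of_invariant_sample_chain
    (P : NNReal → X → Measure X) (hP : ∀ t x, IsProbabilityMeasure (P t x))
    (hmeas : ∀ t, Measurable (P t))
    -- semigroup property (action on probability measures)
    (hsemi : ∀ (s t : NNReal) (μ : Measure X), IsProbabilityMeasure μ →
      (μ.bind (P s)).bind (P t) = μ.bind (P (s + t)))
    (h : NNReal) (hh : 0 < h)
    (πh : Measure X) [IsProbabilityMeasure πh]
    (hinv : πh.bind (P h) = πh)
    -- known: `π_h` is invariant for `P^{(a/b) h}` for all positive integers `a, b`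
    (hrat : ∀ a b : ℕ, 0 < a → 0 < b → πh.bind (P (((a : NNReal) / (b : NNReal)) * h)) = πh)
    -- continuity at zero in total variation
    (hcont : Tendsto (fun δ : NNReal => tvDist (πh.bind (P δ)) πh) (𝓝[>] 0) (𝓝 0)) :
    ∀ t : NNReal, 0 < t → πh.bind (P t) = πh := by
  have hprob : ∀ (s : NNReal), IsProbabilityMeasure (πh.bind (P s)) := by
    intro s
    constructor
    rw [Measure.bind_apply MeasurableSet.univ (hmeas s).aemeasurable]
    simp only [(fun x => (hP s x).measure_univ)]
    simp
  intro t ht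
  -- key : for every ε > 0 there is δ ∈ (0, ε) with πh.bind (P δ) = πh.bind (P t)
  have key : ∀ ε : ℝ, 0 < ε → ∃ δ : NNReal, 0 < δ ∧ (δ:ℝ) < ε ∧
      πh.bind (P δ) = πh.bind (P t) := by
    intro ε hε
    have hhR : (0:ℝ) < (h:ℝ) := hh
    have htR : (0:ℝ) < (t:ℝ) := ht
    have hlt : max (((t:ℝ) - ε) / h) 0 < (t:ℝ) / h := by
      apply max_lt
      · exact div_lt_div_of_pos_right (by linarith) hhR
      · positivity
    obtain ⟨q, hq1, hq2⟩ := exists_rat_btwn hlt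
    have hq0 : (0:ℝ) < (q:ℝ) := lt_of_le_of_lt (le_max_right _ _) hq1
    have hqpos : 0 < q := by exact_mod_cast hq0
    set a : ℕ := q.num.toNat with ha
    set b : ℕ := q.den with hb
    have hapos : 0 < a := by
      have : 0 < q.num := Rat.num_pos.mpr hqpos
      omega
    have hbpos : 0 < b := q.pos
    have hqab : (q:ℝ) = (a:ℝ) / (b:ℝ) := by
      have hnum : ((a:ℕ) : ℝ) = (q.num : ℝ) := by
        rw [ha]
        exact_mod_cast congrArg (fun z : ℤ => (z : ℝ))
          (Int.toNat_of_nonneg (le_of_lt (Rat.num_pos.mpr hqpos)))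
      rw [hnum, hb]
      exact_mod_cast q.num_div_den.symm
    set s : NNReal := ((a : NNReal) / (b : NNReal)) * h with hs
    have hsR : (s:ℝ) = (q:ℝ) * h := by
      rw [hs, hqab]
      push_cast
      ring
    have hst : s < t := by
      rw [← NNReal.coe_lt_coe, hsR]
      calc (q:ℝ) * h < ((t:ℝ)/h) * h := by
            exact mul_lt_mul_of_pos_right hq2 hhR
        _ = (t:ℝ) := by field_simp
    have hδε : (t:ℝ) - (s:ℝ) < ε := by
      have : ((t:ℝ) - ε) / h < (q:ℝ) := lt_of_le_of_lt (le_max_left _ _) hq1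
      have h2 : (t:ℝ) - ε < (q:ℝ) * h := by
        have := mul_lt_mul_of_pos_right this hhR
        calc (t:ℝ) - ε = (((t:ℝ) - ε)/h) * h := by field_simp
          _ < (q:ℝ) * h := this
      rw [hsR]; linarith
    refine ⟨t - s, ?_, ?_, ?_⟩
    · exact tsub_pos_of_lt hst
    · rw [NNReal.coe_sub hst.le]; exact hδε
    · have hrec : s + (t - s) = t := add_tsub_cancel_of_le hst.le
      have := hsemi s (t - s) πh inferInstance
      rw [hrec] at this
      rw [hrat a b hapos hbpos] at this
      exact this
  -- frequently the distance equals the constant tvDist (πh.bind (P t)) πh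
  have hfreq : ∃ᶠ δ in 𝓝[>] (0:NNReal),
      tvDist (πh.bind (P δ)) πh = tvDist (πh.bind (P t)) πh := by
    rw [Filter.frequently_iff]
    intro U hU
    rw [Metric.mem_nhdsWithin_iff] at hU
    obtain ⟨ε, hε, hball⟩ := hU
    obtain ⟨δ, hδ0, hδε, hδeq⟩ := key ε hε
    refine ⟨δ, hball ⟨?_, hδ0⟩, by rw [hδeq]⟩
    rw [Metric.mem_ball, NNReal.dist_eq]
    simpa using hδε
  have hc : tvDist (πh.bind (P t)) πh = 0 :=
    (tendsto_nhds_unique_of_frequently_eq hcont tendsto_const_nhds hfreq).symm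
  -- conclude equality of measures
  have := hprob t
  ext A hA
  have hb := abs_le_tvDist (πh.bind (P t)) πh hA
  rw [hc] at hb
  have habs : ((πh.bind (P t)) A).toReal = (πh A).toReal := by
    have := abs_nonneg (((πh.bind (P t)) A).toReal - (πh A).toReal)
    have : |((πh.bind (P t)) A).toReal - (πh A).toReal| = 0 := le_antisymm hb this
    linarith [abs_eq_zero.mp this]
  exact (ENNReal.toReal_eq_toReal_iff' (measure_ne_top _ _) (measure_ne_top _ _)).mp habs
end
end

section
/- With β > 1 and assumptions as in Corollary 2.5 (uniform reference set 𝔠, finite β-moments of return times from μ and from the invariant measure π), for bounded measurable ξ, η the correlation C^{ξ,η}_π(n) = |∫(P^n η)ξ dπ − ∫ P^n η dπ · ∫ ξ dπ| satisfies C^{ξ,η}_π(n) ≤ C ‖ξ‖_∞ ‖η‖_∞ E_π[τ_𝔠^β] n^{−β} for some constant C, provided E_x[τ_𝔠^β] is μ-integrable as a function of the starting point under π. -/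
open MeasureTheory ENNReal Filter Topology ProbabilityTheory
noncomputable section

variable {X : Type*} [MeasurableSpace X]

/-- first return time (≥ 1) of a discrete path to the set `𝔠`, valued in `ℕ∞`. -/
def retTime (𝔠 : Set X) (ω : ℕ → X) : ℕ∞ :=
  sInf ((fun n : ℕ => (n : ℕ∞)) '' {n : ℕ | 0 < n ∧ ω n ∈ 𝔠})

/-- `E[τ_𝔠^β]` under a path measure. -/
def retMoment (μpath : Measure (ℕ → X)) (𝔠 : Set X) (β : ℝ) : ℝ≥0∞ :=
  ∫⁻ ω, ((retTime 𝔠 ω : ℝ≥0∞)) ^ β ∂μpath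

namespace PDHelper

variable {α : Type*} [MeasurableSpace α]

lemma integrable_of_bdd' {μ : Measure α} [IsFiniteMeasure μ] {f : α → ℝ} (hf : Measurable f)
    {K : ℝ} (hK : ∀ x, |f x| ≤ K) : Integrable f μ :=
  ⟨hf.aestronglyMeasurable,
    HasFiniteIntegral.of_bounded (C := K) (Filter.Eventually.of_forall fun x => by
      simpa [Real.norm_eq_abs] using hK x)⟩

lemma tv_bddAbove (μ ν : Measure α) [IsProbabilityMeasure μ] [IsProbabilityMeasure ν] :
    BddAbove (Set.range fun A : {s : Set α // MeasurableSet s} =>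
      |(μ A).toReal - (ν A).toReal|) := by
  refine ⟨1, ?_⟩
  rintro r ⟨A, rfl⟩
  have h1 : (μ ↑A).toReal ≤ 1 := by
    have := ENNReal.toReal_mono (a := μ ↑A) one_ne_top prob_le_one
    simpa using this
  have h2 : (ν ↑A).toReal ≤ 1 := by
    have := ENNReal.toReal_mono (a := ν ↑A) one_ne_top prob_le_one
    simpa using this
  have h3 : (0:ℝ) ≤ (μ ↑A).toReal := ENNReal.toReal_nonneg
  have h4 : (0:ℝ) ≤ (ν ↑A).toReal := ENNReal.toReal_nonneg
  rw [abs_sub_le_iff]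
  constructor <;> linarith

lemma tv_ge (μ ν : Measure α) [IsProbabilityMeasure μ] [IsProbabilityMeasure ν]
    {s : Set α} (hs : MeasurableSet s) :
    |(μ s).toReal - (ν s).toReal| ≤ tvDist μ ν :=
  le_ciSup (tv_bddAbove μ ν) ⟨s, hs⟩

lemma tv_nonneg (μ ν : Measure α) [IsProbabilityMeasure μ] [IsProbabilityMeasure ν] :
    0 ≤ tvDist μ ν :=
  le_trans (abs_nonneg _) (tv_ge μ ν MeasurableSet.empty)

lemma abs_integral_sub_le_tv (μ ν : Measure α) [IsProbabilityMeasure μ] [IsProbabilityMeasure ν]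
    {f : α → ℝ} (hf : Measurable f) {K : ℝ} (hK : ∀ x, |f x| ≤ K) :
    |∫ x, f x ∂μ - ∫ x, f x ∂ν| ≤ 2 * K * tvDist μ ν := by
  have hα : Nonempty α := by
    rcases isEmpty_or_nonempty α with hX | hX
    · exfalso
      have h1 : μ Set.univ = 1 := measure_univ
      rw [Set.univ_eq_empty_iff.2 hX, measure_empty] at h1
      exact zero_ne_one h1
    · exact hX
  have hK0 : 0 ≤ K := le_trans (abs_nonneg _) (hK hα.some)
  obtain ⟨s, hs, hsle, hsge⟩ := hahn_decomposition (μ := μ) (ν := ν)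
  have hres : ν.restrict s ≤ μ.restrict s := by
    refine Measure.le_iff.2 fun t ht => ?_
    rw [Measure.restrict_apply ht, Measure.restrict_apply ht]
    exact hsle _ (ht.inter hs) Set.inter_subset_right
  have hres' : μ.restrict sᶜ ≤ ν.restrict sᶜ := by
    refine Measure.le_iff.2 fun t ht => ?_
    rw [Measure.restrict_apply ht, Measure.restrict_apply ht]
    exact hsge _ (ht.inter hs.compl) Set.inter_subset_right
  set ρ : Measure α := μ.restrict s - ν.restrict s with hρdef
  set ρ' : Measure α := ν.restrict sᶜ - μ.restrict sᶜ with hρ'def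
  have hρ : ρ + ν.restrict s = μ.restrict s := Measure.sub_add_cancel_of_le hres
  have hρ' : ρ' + μ.restrict sᶜ = ν.restrict sᶜ := Measure.sub_add_cancel_of_le hres'
  haveI : IsFiniteMeasure ρ := isFiniteMeasure_of_le (μ.restrict s) Measure.sub_le
  haveI : IsFiniteMeasure ρ' := isFiniteMeasure_of_le (ν.restrict sᶜ) Measure.sub_le
  have If : ∀ (m : Measure α) [IsFiniteMeasure m], Integrable f m := fun m _ =>
    integrable_of_bdd' hf hK
  have h1 : ∫ x, f x ∂(μ.restrict s) = ∫ x, f x ∂ρ + ∫ x, f x ∂(ν.restrict s) := by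
    rw [← hρ, integral_add_measure (If ρ) (If _)]
  have h2 : ∫ x, f x ∂(ν.restrict sᶜ) = ∫ x, f x ∂ρ' + ∫ x, f x ∂(μ.restrict sᶜ) := by
    rw [← hρ', integral_add_measure (If ρ') (If _)]
  have hμsplit : ∫ x, f x ∂μ = ∫ x, f x ∂(μ.restrict s) + ∫ x, f x ∂(μ.restrict sᶜ) := by
    rw [← integral_add_measure (If _) (If _), Measure.restrict_add_restrict_compl hs]
  have hνsplit : ∫ x, f x ∂ν = ∫ x, f x ∂(ν.restrict s) + ∫ x, f x ∂(ν.restrict sᶜ) := by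
    rw [← integral_add_measure (If _) (If _), Measure.restrict_add_restrict_compl hs]
  have hρu : (ρ Set.univ).toReal = (μ s).toReal - (ν s).toReal := by
    rw [hρdef, Measure.sub_apply MeasurableSet.univ hres]
    rw [Measure.restrict_apply_univ, Measure.restrict_apply_univ]
    exact ENNReal.toReal_sub_of_le (hsle s hs subset_rfl) (measure_ne_top μ s)
  have hρ'u : (ρ' Set.univ).toReal = (ν sᶜ).toReal - (μ sᶜ).toReal := by
    rw [hρ'def, Measure.sub_apply MeasurableSet.univ hres']
    rw [Measure.restrict_apply_univ, Measure.restrict_apply_univ]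
    exact ENNReal.toReal_sub_of_le (hsge sᶜ hs.compl subset_rfl) (measure_ne_top ν sᶜ)
  have hb1 : |∫ x, f x ∂ρ| ≤ K * tvDist μ ν := by
    have := norm_integral_le_of_norm_le_const (μ := ρ) (f := f) (C := K)
      (Filter.Eventually.of_forall fun x => by simpa [Real.norm_eq_abs] using hK x)
    rw [Real.norm_eq_abs] at this
    refine le_trans this ?_
    rw [measureReal_def, hρu]
    refine mul_le_mul_of_nonneg_left ?_ hK0
    exact le_trans (le_abs_self _) (tv_ge μ ν hs)
  have hb2 : |∫ x, f x ∂ρ'| ≤ K * tvDist μ ν := by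
    have := norm_integral_le_of_norm_le_const (μ := ρ') (f := f) (C := K)
      (Filter.Eventually.of_forall fun x => by simpa [Real.norm_eq_abs] using hK x)
    rw [Real.norm_eq_abs] at this
    refine le_trans this ?_
    rw [measureReal_def, hρ'u]
    refine mul_le_mul_of_nonneg_left ?_ hK0
    refine le_trans ?_ (tv_ge μ ν hs.compl)
    rw [abs_sub_comm]
    exact le_abs_self _
  have hkey : ∫ x, f x ∂μ - ∫ x, f x ∂ν = ∫ x, f x ∂ρ - ∫ x, f x ∂ρ' := by
    rw [hμsplit, hνsplit, h1, h2]; ring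
  rw [hkey]
  calc |∫ x, f x ∂ρ - ∫ x, f x ∂ρ'| ≤ |∫ x, f x ∂ρ| + |∫ x, f x ∂ρ'| := abs_sub _ _
    _ ≤ K * tvDist μ ν + K * tvDist μ ν := add_le_add hb1 hb2
    _ = 2 * K * tvDist μ ν := by ring

lemma measurable_param_integral {β : Type*} [MeasurableSpace β] (Px : α → Measure β)
    (hPx : ∀ x, IsProbabilityMeasure (Px x)) (hm : Measurable Px)
    {f : β → ℝ} (hf : Measurable f) {K : ℝ} (hK : ∀ y, |f y| ≤ K) :
    Measurable fun x => ∫ y, f y ∂(Px x) := by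
  have hA : Measurable fun x => ∫⁻ y, ENNReal.ofReal (f y) ∂(Px x) :=
    (Measure.measurable_lintegral hf.ennreal_ofReal).comp hm
  have hB : Measurable fun x => ∫⁻ y, ENNReal.ofReal (-f y) ∂(Px x) :=
    (Measure.measurable_lintegral hf.neg.ennreal_ofReal).comp hm
  have heq : (fun x => ∫ y, f y ∂(Px x)) = fun x =>
      (∫⁻ y, ENNReal.ofReal (f y) ∂(Px x)).toReal -
        (∫⁻ y, ENNReal.ofReal (-f y) ∂(Px x)).toReal := by
    funext x
    haveI := hPx x
    exact integral_eq_lintegral_pos_part_sub_lintegral_neg_part (integrable_of_bdd' hf hK)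
  rw [heq]
  exact hA.ennreal_toReal.sub hB.ennreal_toReal

lemma integral_bind_bdd {β : Type*} [MeasurableSpace β] (π : Measure α) [IsProbabilityMeasure π]
    (Px : α → Measure β) (hPx : ∀ x, IsProbabilityMeasure (Px x)) (hm : Measurable Px)
    {f : β → ℝ} (hf : Measurable f) {K : ℝ} (hK0 : 0 ≤ K) (hK : ∀ y, |f y| ≤ K) :
    ∫ x, ∫ y, f y ∂(Px x) ∂π = ∫ y, f y ∂(π.bind Px) := by
  haveI : IsProbabilityMeasure (π.bind Px) := by
    constructor
    rw [Measure.bind_apply MeasurableSet.univ hm.aemeasurable]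
    have h : ∀ x, Px x Set.univ = 1 := fun x => (hPx x).measure_univ
    simp [h]
  set A : α → ℝ≥0∞ := fun x => ∫⁻ y, ENNReal.ofReal (f y) ∂(Px x) with hAdef
  set B : α → ℝ≥0∞ := fun x => ∫⁻ y, ENNReal.ofReal (-f y) ∂(Px x) with hBdef
  have hAm : Measurable A := (Measure.measurable_lintegral hf.ennreal_ofReal).comp hm
  have hBm : Measurable B := (Measure.measurable_lintegral hf.neg.ennreal_ofReal).comp hm
  have hAb : ∀ x, A x ≤ ENNReal.ofReal K := fun x => by
    haveI := hPx x
    calc A x ≤ ∫⁻ _, ENNReal.ofReal K ∂(Px x) :=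
          lintegral_mono fun y => ENNReal.ofReal_le_ofReal ((abs_le.1 (hK y)).2)
      _ = ENNReal.ofReal K := by simp [measure_univ]
  have hBb : ∀ x, B x ≤ ENNReal.ofReal K := fun x => by
    haveI := hPx x
    calc B x ≤ ∫⁻ _, ENNReal.ofReal K ∂(Px x) :=
          lintegral_mono fun y => ENNReal.ofReal_le_ofReal (by linarith [(abs_le.1 (hK y)).1])
      _ = ENNReal.ofReal K := by simp [measure_univ]
  have hAlt : ∀ x, A x < ⊤ := fun x => lt_of_le_of_lt (hAb x) ofReal_lt_top
  have hBlt : ∀ x, B x < ⊤ := fun x => lt_of_le_of_lt (hBb x) ofReal_lt_top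
  have intA : Integrable (fun x => (A x).toReal) π :=
    integrable_of_bdd' hAm.ennreal_toReal (K := K) fun x => by
      rw [abs_of_nonneg ENNReal.toReal_nonneg]
      exact ENNReal.toReal_le_of_le_ofReal hK0 (hAb x)
  have intB : Integrable (fun x => (B x).toReal) π :=
    integrable_of_bdd' hBm.ennreal_toReal (K := K) fun x => by
      rw [abs_of_nonneg ENNReal.toReal_nonneg]
      exact ENNReal.toReal_le_of_le_ofReal hK0 (hBb x)
  have key : ∀ x, ∫ y, f y ∂(Px x) = (A x).toReal - (B x).toReal := fun x => by
    haveI := hPx x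
    exact integral_eq_lintegral_pos_part_sub_lintegral_neg_part (integrable_of_bdd' hf hK)
  calc ∫ x, ∫ y, f y ∂(Px x) ∂π = ∫ x, ((A x).toReal - (B x).toReal) ∂π :=
        integral_congr_ae (Filter.Eventually.of_forall key)
    _ = (∫ x, (A x).toReal ∂π) - ∫ x, (B x).toReal ∂π := integral_sub intA intB
    _ = (∫⁻ x, A x ∂π).toReal - (∫⁻ x, B x ∂π).toReal := by
        rw [integral_toReal hAm.aemeasurable (Filter.Eventually.of_forall hAlt),
          integral_toReal hBm.aemeasurable (Filter.Eventually.of_forall hBlt)]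
    _ = (∫⁻ y, ENNReal.ofReal (f y) ∂(π.bind Px)).toReal -
        (∫⁻ y, ENNReal.ofReal (-f y) ∂(π.bind Px)).toReal := by
        rw [Measure.lintegral_bind hm.aemeasurable hf.ennreal_ofReal.aemeasurable,
          Measure.lintegral_bind (f := fun y => ENNReal.ofReal (-f y)) hm.aemeasurable
            hf.neg.ennreal_ofReal.aemeasurable]
    _ = ∫ y, f y ∂(π.bind Px) :=
        (integral_eq_lintegral_pos_part_sub_lintegral_neg_part (integrable_of_bdd' hf hK)).symm

end PDHelper

/-- Polynomial decay of correlations for bounded observables under the invariant measure `π`: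
assuming the quantitative contraction bound of Corollary 2.5 and `π`-integrability of
`x ↦ E_x[τ_𝔠^β]`, the correlation satisfies
`C^{ξ,η}_π(n) ≤ C ‖ξ‖_∞ ‖η‖_∞ E_π[τ_𝔠^β] n^{-β}`. -/
theorem polynomial_decay_of_correlation
    (Px : X → Measure (ℕ → X)) (hPx : ∀ x, IsProbabilityMeasure (Px x))
    (hmeasPx : Measurable Px)
    (𝔠 : Set X) (h𝔠 : MeasurableSet 𝔠) (β : ℝ) (hβ : 1 < β)
    (π : Measure X) [IsProbabilityMeasure π]
    -- `π` is invariant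
    (hinv : ∀ n : ℕ, Measure.map (fun ω => ω n) (π.bind Px) = π)
    -- finite return-time moment from the invariant measure
    (hπmom : retMoment (π.bind Px) 𝔠 β < ⊤)
    -- the quantitative contraction bound (Corollary 2.5)
    (C₀ : ℝ) (hC₀ : 0 < C₀)
    (hcontr : ∀ (x : X) (n : ℕ), 0 < n →
      (n : ℝ) ^ β * tvDist ((Px x).map (fun ω => ω n))
          (Measure.map (fun ω => ω n) (π.bind Px)) ≤
        C₀ * ((retMoment (Px x) 𝔠 β).toReal + (retMoment (π.bind Px) 𝔠 β).toReal))
    -- `π`-integrability of the pointwise return-time moments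
    (hint : Integrable (fun x => (retMoment (Px x) 𝔠 β).toReal) π)
    (ξ η : X → ℝ) (hξ : Measurable ξ) (hη : Measurable η)
    (Cξ Cη : ℝ) (hCξ : ∀ x, |ξ x| ≤ Cξ) (hCη : ∀ x, |η x| ≤ Cη) :
    ∃ C : ℝ, 0 < C ∧ ∀ n : ℕ, 0 < n →
      |(∫ x, (∫ ω, η (ω n) ∂(Px x)) * ξ x ∂π) -
          (∫ x, (∫ ω, η (ω n) ∂(Px x)) ∂π) * (∫ x, ξ x ∂π)| ≤
        C * Cξ * Cη * (retMoment (π.bind Px) 𝔠 β).toReal * (n : ℝ) ^ (-β) := by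
  classical
  have hXne : Nonempty X := by
    rcases isEmpty_or_nonempty X with hX | hX
    · exfalso
      have h1 : π Set.univ = 1 := measure_univ
      rw [Set.univ_eq_empty_iff.2 hX, measure_empty] at h1
      exact zero_ne_one h1
    · exact hX
  have hCξ0 : 0 ≤ Cξ := le_trans (abs_nonneg _) (hCξ hXne.some)
  have hCη0 : 0 ≤ Cη := le_trans (abs_nonneg _) (hCη hXne.some)
  haveI hbindprob : IsProbabilityMeasure (π.bind Px) := by
    constructor
    rw [Measure.bind_apply MeasurableSet.univ hmeasPx.aemeasurable]
    have h : ∀ x, Px x Set.univ = 1 := fun x => (hPx x).measure_univ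
    simp [h]
  set Mr : ℝ := (retMoment (π.bind Px) 𝔠 β).toReal with hMrdef
  have hMr1 : 1 ≤ Mr := by
    have h1le : (1 : ℝ≥0∞) ≤ retMoment (π.bind Px) 𝔠 β := by
      have hone : ∫⁻ _ω, (1:ℝ≥0∞) ∂(π.bind Px) = 1 := by simp [measure_univ]
      rw [retMoment, ← hone]
      refine lintegral_mono fun ω => ?_
      have h1 : (1 : ℕ∞) ≤ retTime 𝔠 ω := by
        refine le_sInf ?_
        rintro b ⟨m, ⟨hm0, -⟩, rfl⟩
        show (1 : ℕ∞) ≤ (m : ℕ∞)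
        exact_mod_cast hm0
      have h2 : (1 : ℝ≥0∞) ≤ ((retTime 𝔠 ω : ℝ≥0∞)) := by exact_mod_cast h1
      calc (1:ℝ≥0∞) = 1 ^ β := (ENNReal.one_rpow β).symm
        _ ≤ _ := ENNReal.rpow_le_rpow h2 (by linarith)
    have := ENNReal.toReal_mono hπmom.ne h1le
    simpa using this
  have hMr0 : 0 ≤ Mr := le_trans zero_le_one hMr1
  set I : ℝ := ∫ x, (retMoment (Px x) 𝔠 β).toReal ∂π with hIdef
  have hI0 : 0 ≤ I := by
    rw [hIdef]; exact integral_nonneg fun x => ENNReal.toReal_nonneg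
  refine ⟨2 * C₀ * (I + Mr + 1), by positivity, fun n hn => ?_⟩
  set g : X → ℝ := fun x => ∫ ω, η (ω n) ∂(Px x) with hgdef
  have hfm : Measurable fun ω : ℕ → X => η (ω n) := hη.comp (measurable_pi_apply n)
  have hfb : ∀ ω : ℕ → X, |η (ω n)| ≤ Cη := fun ω => hCη _
  have hg : Measurable g := PDHelper.measurable_param_integral Px hPx hmeasPx hfm hfb
  have hgbd : ∀ x, |g x| ≤ Cη := fun x => by
    haveI := hPx x
    have := norm_integral_le_of_norm_le_const (μ := Px x) (f := fun ω => η (ω n)) (C := Cη)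
      (Filter.Eventually.of_forall fun ω => by simpa [Real.norm_eq_abs] using hCη (ω n))
    simpa [hgdef, Real.norm_eq_abs, measure_univ] using this
  set a : ℝ := ∫ x, η x ∂π with hadef
  have hmapint : ∫ ω, η (ω n) ∂(π.bind Px)
      = ∫ y, η y ∂(Measure.map (fun ω => ω n) (π.bind Px)) :=
    (integral_map (measurable_pi_apply n).aemeasurable hη.aestronglyMeasurable).symm
  have hga : ∫ x, g x ∂π = a := by
    simp only [hgdef]
    rw [PDHelper.integral_bind_bdd π Px hPx hmeasPx hfm hCη0 hfb, hmapint, hinv n]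
  have intξ : Integrable ξ π := PDHelper.integrable_of_bdd' hξ hCξ
  have intgξ : Integrable (fun x => g x * ξ x) π := by
    refine PDHelper.integrable_of_bdd' (hg.mul hξ) (K := Cη * Cξ) fun x => ?_
    rw [abs_mul]
    exact mul_le_mul (hgbd x) (hCξ x) (abs_nonneg _) hCη0
  have hsplit : ∫ x, (g x - a) * ξ x ∂π
      = (∫ x, g x * ξ x ∂π) - a * ∫ x, ξ x ∂π := by
    have h : ∀ x, (g x - a) * ξ x = g x * ξ x - a * ξ x := fun x => by ring
    rw [integral_congr_ae (Filter.Eventually.of_forall h),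
      integral_sub intgξ (intξ.const_mul a), integral_const_mul]
  suffices hmain : |∫ x, (g x - a) * ξ x ∂π| ≤
      2 * C₀ * (I + Mr + 1) * Cξ * Cη * Mr * (n : ℝ) ^ (-β) by
    have heq : |(∫ x, (∫ ω, η (ω n) ∂(Px x)) * ξ x ∂π) -
        (∫ x, (∫ ω, η (ω n) ∂(Px x)) ∂π) * (∫ x, ξ x ∂π)|
        = |∫ x, (g x - a) * ξ x ∂π| := by
      simp only [← hgdef]
      rw [hsplit, hga]
    rw [heq]
    exact hmain
  set c : ℝ := 2 * Cη * Cξ * C₀ * (n:ℝ) ^ (-β) with hcdef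
  have hnb0 : (0:ℝ) < (n:ℝ) ^ (-β) :=
    Real.rpow_pos_of_pos (by exact_mod_cast hn) _
  have habs : ∀ x, |g x - a| * |ξ x| ≤ c * ((retMoment (Px x) 𝔠 β).toReal + Mr) := by
    intro x
    haveI := hPx x
    haveI : IsProbabilityMeasure ((Px x).map fun ω => ω n) :=
      Measure.isProbabilityMeasure_map (measurable_pi_apply n).aemeasurable
    have hmapeq : ∫ y, η y ∂((Px x).map fun ω => ω n) = g x := by
      simp only [hgdef]
      exact integral_map (measurable_pi_apply n).aemeasurable hη.aestronglyMeasurable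
    have h1 : |g x - a| ≤ 2 * Cη * tvDist ((Px x).map fun ω => ω n) π := by
      have := PDHelper.abs_integral_sub_le_tv ((Px x).map fun ω => ω n) π hη hCη
      rw [hmapeq] at this
      exact this
    have htv0 : 0 ≤ tvDist ((Px x).map fun ω => ω n) π := PDHelper.tv_nonneg _ _
    have hE0 : 0 ≤ (retMoment (Px x) 𝔠 β).toReal := ENNReal.toReal_nonneg
    have h2Cη : (0:ℝ) ≤ 2 * Cη := by linarith
    have htv : tvDist ((Px x).map fun ω => ω n) π ≤
        C₀ * ((retMoment (Px x) 𝔠 β).toReal + Mr) * (n:ℝ) ^ (-β) := by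
      have h := hcontr x n hn
      rw [hinv n] at h
      have hnp : (0:ℝ) < (n:ℝ) ^ β := Real.rpow_pos_of_pos (by exact_mod_cast hn) _
      have hinveq : (n:ℝ) ^ (-β) = ((n:ℝ) ^ β)⁻¹ := by
        rw [Real.rpow_neg (Nat.cast_nonneg n)]
      rw [hinveq, mul_comm (C₀ * ((retMoment (Px x) 𝔠 β).toReal + Mr)) _,
        ← div_eq_inv_mul, le_div_iff₀ hnp]
      calc tvDist ((Px x).map fun ω => ω n) π * (n:ℝ) ^ β
          = (n:ℝ) ^ β * tvDist ((Px x).map fun ω => ω n) π := by ring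
        _ ≤ C₀ * ((retMoment (Px x) 𝔠 β).toReal + Mr) := h
    calc |g x - a| * |ξ x|
        ≤ (2 * Cη * tvDist ((Px x).map fun ω => ω n) π) * Cξ :=
          mul_le_mul h1 (hCξ x) (abs_nonneg _) (mul_nonneg h2Cη htv0)
      _ ≤ (2 * Cη * (C₀ * ((retMoment (Px x) 𝔠 β).toReal + Mr) * (n:ℝ) ^ (-β))) * Cξ := by
          refine mul_le_mul_of_nonneg_right ?_ hCξ0
          exact mul_le_mul_of_nonneg_left htv h2Cη
      _ = c * ((retMoment (Px x) 𝔠 β).toReal + Mr) := by rw [hcdef]; ring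
  have hbdint : Integrable (fun x => c * ((retMoment (Px x) 𝔠 β).toReal + Mr)) π :=
    (hint.add (integrable_const Mr)).const_mul c
  have step2 : |∫ x, (g x - a) * ξ x ∂π| ≤ ∫ x, |g x - a| * |ξ x| ∂π := by
    have := norm_integral_le_integral_norm (μ := π) (f := fun x => (g x - a) * ξ x)
    simpa [Real.norm_eq_abs] using this
  have step3 : ∫ x, |g x - a| * |ξ x| ∂π
      ≤ ∫ x, c * ((retMoment (Px x) 𝔠 β).toReal + Mr) ∂π :=
    integral_mono_of_nonneg
      (Filter.Eventually.of_forall fun x => mul_nonneg (abs_nonneg _) (abs_nonneg _)) hbdint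
      (Filter.Eventually.of_forall habs)
  have step4 : ∫ x, c * ((retMoment (Px x) 𝔠 β).toReal + Mr) ∂π = c * (I + Mr) := by
    rw [integral_const_mul, integral_add hint (integrable_const Mr), integral_const]
    rw [hIdef]
    simp [measure_univ]
  have hkey : I + Mr ≤ (I + Mr + 1) * Mr := by nlinarith
  have hc2 : (0:ℝ) ≤ 2 * Cη * Cξ * C₀ * (n:ℝ) ^ (-β) := by positivity
  calc |∫ x, (g x - a) * ξ x ∂π| ≤ ∫ x, |g x - a| * |ξ x| ∂π := step2
    _ ≤ ∫ x, c * ((retMoment (Px x) 𝔠 β).toReal + Mr) ∂π := step3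
    _ = c * (I + Mr) := step4
    _ ≤ c * ((I + Mr + 1) * Mr) := by
        rw [hcdef]
        exact mul_le_mul_of_nonneg_left hkey hc2
    _ = 2 * C₀ * (I + Mr + 1) * Cξ * Cη * Mr * (n : ℝ) ^ (-β) := by rw [hcdef]; ring
end
end
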